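/- (Alternating power relations.) Let n ≥ 4 be even, let Γ be a perfect matching on {1,…,n}, and let i be an odd integer with 1 < i < n−1. For a permutation σ of {1,…,n}, let σΓ denote the directed graph {(σ(a),σ(b)) : (a,b) ∈ Γ}. Then Σ_{σ ∈ S_n} sgn(σ) · (X_{σΓ})^i = 0 in ℤ[u_1,…,u_n,v_1,…,v_n]. -/
import Mathlib

open MvPolynomial

/-- A directed multigraph on the vertex set `Fin n`: a multiset of ordered pairs
(multiple edges allowed). -/
abbrev DGraph (n : ℕ) := Multiset (Fin n × Fin n)

/-- `Γ` has no loops. -/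
def DGraph.loopless {n : ℕ} (Γ : DGraph n) : Prop := ∀ e ∈ Γ, e.1 ≠ e.2

/-- The multidegree (valence) of `Γ` at the vertex `v`: the number of edges of `Γ`
incident to `v`, counted with multiplicity. -/
def DGraph.mdeg {n : ℕ} (Γ : DGraph n) (v : Fin n) : ℕ :=
  Multiset.countP (fun e => e.1 = v) Γ + Multiset.countP (fun e => e.2 = v) Γ

/-- A perfect matching on `{1,…,n}`: a directed graph of multidegree `(1,…,1)`.
(Multidegree one everywhere forces looplessness.) -/
def DGraph.isPM {n : ℕ} (Γ : DGraph n) : Prop := ∀ v, Γ.mdeg v = 1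

/-- The invariant `X_Γ = ∏_{(i,j) ∈ Γ} (u_j v_i - u_i v_j)`, where the variable
`Sum.inl i` plays the role of `u_i` and `Sum.inr i` plays the role of `v_i`. -/
noncomputable def XG {n : ℕ} (Γ : DGraph n) : MvPolynomial (Fin n ⊕ Fin n) ℤ :=
  (Γ.map (fun e => X (Sum.inl e.2) * X (Sum.inr e.1) - X (Sum.inl e.1) * X (Sum.inr e.2))).prod

/-- Key vanishing lemma: an alternating sum of products `∏ x, F x (σ x)` vanishes as soon
as two of the "row functions" `F v`, `F w` (with `v ≠ w`) coincide. -/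
private lemma key_vanish {A : Type*} [CommRing A] {n : ℕ} (F : Fin n → Fin n → A)
    (v w : Fin n) (hvw : v ≠ w) (hF : ∀ y, F v y = F w y) :
    ∑ σ : Equiv.Perm (Fin n), ((Equiv.Perm.sign σ : ℤˣ) : ℤ) • ∏ x, F x (σ x) = 0 := by
  apply Finset.sum_ninvolution (g := fun σ => σ * Equiv.swap v w)
  · intro σ
    have hswap : ∀ x, F (Equiv.swap v w x) (σ x) = F x (σ x) := by
      intro x
      rcases eq_or_ne x v with rfl | hxv
      · rw [Equiv.swap_apply_left]; exact (hF _).symm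
      rcases eq_or_ne x w with rfl | hxw
      · rw [Equiv.swap_apply_right]; exact hF _
      · rw [Equiv.swap_apply_of_ne_of_ne hxv hxw]
    have hprod : ∏ x, F x ((σ * Equiv.swap v w) x) = ∏ x, F x (σ x) := by
      have h := Equiv.prod_comp (Equiv.swap v w) (fun x => F (Equiv.swap v w x) (σ x))
      simp only [Equiv.swap_apply_self] at h
      calc ∏ x, F x ((σ * Equiv.swap v w) x)
          = ∏ x, F x (σ (Equiv.swap v w x)) := by
            simp only [Equiv.Perm.mul_apply]
        _ = ∏ x, F (Equiv.swap v w x) (σ x) := h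
        _ = ∏ x, F x (σ x) := Finset.prod_congr rfl fun x _ => hswap x
    have hs : ((Equiv.Perm.sign (σ * Equiv.swap v w) : ℤˣ) : ℤ)
        = -((Equiv.Perm.sign σ : ℤˣ) : ℤ) := by
      simp [Equiv.Perm.sign_swap hvw]
    rw [hprod, hs, neg_smul]
    exact add_neg_cancel _
  · intro σ _ h
    apply hvw
    have h1 : Equiv.swap v w = 1 := mul_left_cancel (a := σ) (by simpa using h)
    have h2 := congrArg (fun e => e v) h1
    simpa using h2.symm
  · intro σ; exact Finset.mem_univ _
  · intro σ
    simp [mul_assoc]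

/-- One monomial piece: the contribution of a single vertex `z` with `u`-exponent `c`
(out of total degree `i`). -/
private noncomputable def Wm (n i : ℕ) (z : Fin n) (c : ℕ) :
    MvPolynomial (Fin n ⊕ Fin n) ℤ :=
  X (Sum.inl z) ^ c * X (Sum.inr z) ^ (i - c)

/-- The binomial coefficient (with sign) of the expansion, as a constant polynomial. -/
private noncomputable def dcoef (n i j : ℕ) : MvPolynomial (Fin n ⊕ Fin n) ℤ :=
  (((-1 : ℤ) ^ (i - j) * (i.choose j) : ℤ) : MvPolynomial (Fin n ⊕ Fin n) ℤ)

/-- Binomial expansion of one bracket power. -/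
private lemma edge_pow {n : ℕ} (i : ℕ) (x y : Fin n) :
    (X (Sum.inl y) * X (Sum.inr x) - X (Sum.inl x) * X (Sum.inr y)
        : MvPolynomial (Fin n ⊕ Fin n) ℤ) ^ i
    = ∑ j ∈ Finset.range (i + 1), dcoef n i j * (Wm n i x (i - j) * Wm n i y j) := by
  rw [sub_eq_add_neg, add_pow]
  refine Finset.sum_congr rfl fun j hj => ?_
  have hj' : j ≤ i := Nat.lt_succ_iff.mp (Finset.mem_range.mp hj)
  simp only [Wm, dcoef, Nat.sub_sub_self hj']
  rw [neg_pow, mul_pow, mul_pow]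
  push_cast
  ring

set_option maxHeartbeats 1600000 in
theorem alternating_power_relation (n : ℕ) (hn : 4 ≤ n) (hne : Even n)
    (Γ : DGraph n) (hΓ : Γ.isPM) (i : ℕ) (hodd : Odd i) (h1 : 1 < i) (h2 : i < n - 1) :
    ∑ σ : Equiv.Perm (Fin n),
      ((Equiv.Perm.sign σ : ℤˣ) : ℤ) • (XG (Γ.map (fun e => (σ e.1, σ e.2)))) ^ i = 0 := by
  classical
  obtain ⟨l, rfl⟩ : ∃ l : List (Fin n × Fin n), Γ = ↑l := ⟨Γ.toList, (Γ.coe_toList).symm⟩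
  set m := l.length with hm
  set ed : Fin m → Fin n × Fin n := l.get with hed
  have hΓl : (↑l : Multiset (Fin n × Fin n)) = Multiset.map ed Finset.univ.val := by
    rw [Fin.univ_def]
    show (↑l : Multiset (Fin n × Fin n)) = Multiset.map ed ↑(List.finRange m)
    rw [Multiset.map_coe, List.map_get_finRange]
  -- counting predicates over the matching
  have hcountP : ∀ (p : Fin n × Fin n → Prop) [DecidablePred p],
      Multiset.countP p ↑l = (Finset.univ.filter (fun k => p (ed k))).card := by
    intro p _
    rw [hΓl, Multiset.countP_map]
    rfl
  have hmdeg : ∀ v : Fin n,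
      (Finset.univ.filter (fun k => (ed k).1 = v)).card
      + (Finset.univ.filter (fun k => (ed k).2 = v)).card = 1 := by
    intro v
    have h := hΓ v
    simp only [DGraph.mdeg, hcountP] at h
    exact h
  -- the endpoint map
  set E : Fin m ⊕ Fin m → Fin n :=
    Sum.elim (fun k => (ed k).1) (fun k => (ed k).2) with hE
  have hE_inj : Function.Injective E := by
    intro x y hxy
    by_contra hne'
    set v : Fin n := E x with hv
    have hyv : E y = v := hxy.symm
    have h2le : 2 ≤ (Finset.univ.filter (fun k => (ed k).1 = v)).card
        + (Finset.univ.filter (fun k => (ed k).2 = v)).card := by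
      have mem1 : ∀ k, (ed k).1 = v → k ∈ Finset.univ.filter (fun k => (ed k).1 = v) :=
        fun k hk => Finset.mem_filter.mpr ⟨Finset.mem_univ _, hk⟩
      have mem2 : ∀ k, (ed k).2 = v → k ∈ Finset.univ.filter (fun k => (ed k).2 = v) :=
        fun k hk => Finset.mem_filter.mpr ⟨Finset.mem_univ _, hk⟩
      rcases x with k | k <;> rcases y with k' | k'
      · have hkk' : k ≠ k' := fun h => hne' (by rw [h])
        have : 1 < (Finset.univ.filter (fun j => (ed j).1 = v)).card :=
          Finset.one_lt_card.mpr ⟨k, mem1 k hv.symm, k', mem1 k' hyv, hkk'⟩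
        omega
      · have h1' : 0 < (Finset.univ.filter (fun j => (ed j).1 = v)).card :=
          Finset.card_pos.mpr ⟨k, mem1 k hv.symm⟩
        have h2' : 0 < (Finset.univ.filter (fun j => (ed j).2 = v)).card :=
          Finset.card_pos.mpr ⟨k', mem2 k' hyv⟩
        omega
      · have h1' : 0 < (Finset.univ.filter (fun j => (ed j).1 = v)).card :=
          Finset.card_pos.mpr ⟨k', mem1 k' hyv⟩
        have h2' : 0 < (Finset.univ.filter (fun j => (ed j).2 = v)).card :=
          Finset.card_pos.mpr ⟨k, mem2 k hv.symm⟩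
        omega
      · have hkk' : k ≠ k' := fun h => hne' (by rw [h])
        have : 1 < (Finset.univ.filter (fun j => (ed j).2 = v)).card :=
          Finset.one_lt_card.mpr ⟨k, mem2 k hv.symm, k', mem2 k' hyv, hkk'⟩
        omega
    have := hmdeg v
    omega
  have hsum1 : ∑ v : Fin n, (Finset.univ.filter (fun k => (ed k).1 = v)).card = m := by
    have := Finset.card_eq_sum_card_fiberwise
      (f := fun k : Fin m => (ed k).1) (s := Finset.univ) (t := Finset.univ)
      (fun x _ => Finset.mem_univ _)
    simpa using this.symm
  have hsum2 : ∑ v : Fin n, (Finset.univ.filter (fun k => (ed k).2 = v)).card = m := by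
    have := Finset.card_eq_sum_card_fiberwise
      (f := fun k : Fin m => (ed k).2) (s := Finset.univ) (t := Finset.univ)
      (fun x _ => Finset.mem_univ _)
    simpa using this.symm
  have hcard : m + m = n := by
    have h := Finset.sum_congr rfl (fun v (_ : v ∈ (Finset.univ : Finset (Fin n))) => hmdeg v)
    rw [Finset.sum_add_distrib, hsum1, hsum2] at h
    simpa using h
  have hE_bij : Function.Bijective E := by
    refine (Fintype.bijective_iff_injective_and_card E).mpr ⟨hE_inj, ?_⟩
    simp [hcard]
  set eqE : (Fin m ⊕ Fin m) ≃ Fin n := Equiv.ofBijective E hE_bij with heqE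
  -- expand each power of XG
  have hXG : ∀ σ : Equiv.Perm (Fin n),
      (XG ((↑l : Multiset (Fin n × Fin n)).map (fun e => (σ e.1, σ e.2)))) ^ i
      = ∑ g ∈ Fintype.piFinset (fun _ : Fin m => Finset.range (i + 1)),
          (∏ k : Fin m, dcoef n i (g k)) *
          ∏ k : Fin m, (Wm n i (σ (ed k).1) (i - g k) * Wm n i (σ (ed k).2) (g k)) := by
    intro σ
    have hXGp : XG ((↑l : Multiset (Fin n × Fin n)).map (fun e => (σ e.1, σ e.2)))
        = ∏ k : Fin m, (X (Sum.inl (σ (ed k).2)) * X (Sum.inr (σ (ed k).1))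
            - X (Sum.inl (σ (ed k).1)) * X (Sum.inr (σ (ed k).2))) := by
      rw [XG, hΓl, Multiset.map_map, Multiset.map_map, Finset.prod_eq_multiset_prod]
      rfl
    rw [hXGp, ← Finset.prod_pow]
    calc ∏ k : Fin m, (X (Sum.inl (σ (ed k).2)) * X (Sum.inr (σ (ed k).1))
            - X (Sum.inl (σ (ed k).1)) * X (Sum.inr (σ (ed k).2))) ^ i
        = ∏ k : Fin m, ∑ j ∈ Finset.range (i + 1),
            dcoef n i j * (Wm n i (σ (ed k).1) (i - j) * Wm n i (σ (ed k).2) j) :=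
          Finset.prod_congr rfl fun k _ => edge_pow i (σ (ed k).1) (σ (ed k).2)
      _ = ∑ g ∈ Fintype.piFinset (fun _ : Fin m => Finset.range (i + 1)),
            ∏ k : Fin m,
              dcoef n i (g k) * (Wm n i (σ (ed k).1) (i - g k) * Wm n i (σ (ed k).2) (g k)) :=
          Finset.prod_univ_sum _ _
      _ = ∑ g ∈ Fintype.piFinset (fun _ : Fin m => Finset.range (i + 1)),
            (∏ k : Fin m, dcoef n i (g k)) *
            ∏ k : Fin m, (Wm n i (σ (ed k).1) (i - g k) * Wm n i (σ (ed k).2) (g k)) := by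
          refine Finset.sum_congr rfl fun g _ => ?_
          rw [← Finset.prod_mul_distrib]
  -- each inner alternating sum vanishes
  have hzero : ∀ g ∈ Fintype.piFinset (fun _ : Fin m => Finset.range (i + 1)),
      ∑ σ : Equiv.Perm (Fin n),
        ((Equiv.Perm.sign σ : ℤˣ) : ℤ) •
          ∏ k : Fin m, (Wm n i (σ (ed k).1) (i - g k) * Wm n i (σ (ed k).2) (g k)) = 0 := by
    intro g hg
    set cg : Fin m ⊕ Fin m → ℕ := Sum.elim (fun k => i - g k) g with hcg
    have hprod : ∀ σ : Equiv.Perm (Fin n),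
        ∏ k : Fin m, (Wm n i (σ (ed k).1) (i - g k) * Wm n i (σ (ed k).2) (g k))
        = ∏ v : Fin n, Wm n i (σ v) (cg (eqE.symm v)) := by
      intro σ
      have h1 : ∏ v : Fin n, Wm n i (σ v) (cg (eqE.symm v))
          = ∏ x : Fin m ⊕ Fin m, Wm n i (σ (E x)) (cg x) := by
        rw [← Equiv.prod_comp eqE (fun v => Wm n i (σ v) (cg (eqE.symm v)))]
        refine Finset.prod_congr rfl fun x _ => ?_
        have hx1 : eqE x = E x := rfl
        rw [Equiv.symm_apply_apply, hx1]
      rw [h1, Fintype.prod_sum_type]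
      simp only [hcg, hE, Sum.elim_inl, Sum.elim_inr]
      rw [← Finset.prod_mul_distrib]
    have hmapsto : ∀ v ∈ (Finset.univ : Finset (Fin n)),
        cg (eqE.symm v) ∈ Finset.range (i + 1) := by
      intro v _
      have hgk : ∀ k, g k < i + 1 := by
        intro k
        have := (Fintype.mem_piFinset.mp hg) k
        simpa using this
      rcases h : eqE.symm v with k | k <;> simp only [hcg, Sum.elim_inl, Sum.elim_inr] <;>
        rw [Finset.mem_range]
      · omega
      · exact hgk k
    have hlt : (Finset.range (i + 1)).card < (Finset.univ : Finset (Fin n)).card := by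
      simp only [Finset.card_range, Finset.card_univ, Fintype.card_fin]
      omega
    obtain ⟨v, _, w, _, hvw, hcvw⟩ :=
      Finset.exists_ne_map_eq_of_card_lt_of_maps_to hlt hmapsto
    calc ∑ σ : Equiv.Perm (Fin n),
          ((Equiv.Perm.sign σ : ℤˣ) : ℤ) •
            ∏ k : Fin m, (Wm n i (σ (ed k).1) (i - g k) * Wm n i (σ (ed k).2) (g k))
        = ∑ σ : Equiv.Perm (Fin n),
            ((Equiv.Perm.sign σ : ℤˣ) : ℤ) •
              ∏ x : Fin n, (fun a y => Wm n i y (cg (eqE.symm a))) x (σ x) := by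
          refine Finset.sum_congr rfl fun σ _ => ?_
          rw [hprod σ]
      _ = 0 := key_vanish (fun a y => Wm n i y (cg (eqE.symm a))) v w hvw
            (fun y => by simp only [hcvw])
  -- put everything together
  simp only [hXG, Finset.smul_sum]
  rw [Finset.sum_comm]
  refine Finset.sum_eq_zero fun g hg => ?_
  simp only [← mul_smul_comm]
  rw [← Finset.mul_sum, hzero g hg, mul_zero]
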